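/- Let λ = (λ_1,…,λ_n), μ = (μ_1,…,μ_n) ∈ P(m|n) and let 1 ≤ k ≤ n be such that λ_j = μ_j for all k ≤ j ≤ n. Then K^{-1}_{(λ_1,…,λ_n),(μ_1,…,μ_n)} = K^{-1}_{(λ_1,…,λ_k),(μ_1,…,μ_k)}, where (λ_1,…,λ_k) and (μ_1,…,μ_k) are partitions of m' = λ_1+…+λ_k in P(m'|k). In particular, K^{-1}_{λ,λ} = 1 for every partition λ. -/

import Mathlib

open Finset MvPolynomial

/-- The `p`-th entry of an `n`-tuple, with default value `0` out of range. -/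
def nth (n : ℕ) (f : Fin n → ℕ) (p : ℕ) : ℕ := if h : p < n then f ⟨p, h⟩ else 0

/-- `a_α = det (x_j ^ α_i)`. -/
noncomputable def aDet (n : ℕ) (α : Fin n → ℕ) : MvPolynomial (Fin n) ℤ :=
  (Matrix.of fun i j : Fin n => (X j : MvPolynomial (Fin n) ℤ) ^ α i).det

/-- `x ^ β = ∏ x_i ^ β_i`. -/
noncomputable def xpow (n : ℕ) (β : Fin n → ℕ) : MvPolynomial (Fin n) ℤ :=
  ∏ i, X i ^ β i

/-- The monomial symmetric polynomial `m_lam(n) = Σ_{w ∈ Sₙ^lam} x^{w(lam)}`: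
the sum of `x^β` over all distinct rearrangements `β` of `lam`. -/
noncomputable def msym (n : ℕ) (lam : Fin n → ℕ) : MvPolynomial (Fin n) ℤ :=
  ∑ β ∈ Finset.univ.image (fun σ : Equiv.Perm (Fin n) => lam ∘ σ), xpow n β

/-- `δ(n) = (0, 1, …, n-1)`. -/
def deltaN (n : ℕ) : Fin n → ℕ := fun i => (i : ℕ)

/-- `P(m∣n)`: partitions of `m` as nondecreasing `n`-tuples (zeros at the beginning). -/
def Par (n m : ℕ) : Finset (Fin n → ℕ) :=
  (Fintype.piFinset fun _ : Fin n => Finset.range (m + 1)).filter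
    fun μ => (∀ i j : Fin n, i ≤ j → μ i ≤ μ j) ∧ ∑ i, μ i = m

/-- `K` is the inverse Kostka matrix in `n` variables: for every weight `m` and
every `lam ∈ P(m∣n)`, `m_lam(n) · a_{δ(n)} = Σ_{μ ∈ P(m∣n)} K lam μ · a_{μ+δ(n)}`
(equivalently `m_lam(n) = Σ_μ K lam μ · s_μ(n)`). -/
def IsInvKostka (n : ℕ) (K : (Fin n → ℕ) → (Fin n → ℕ) → ℤ) : Prop :=
  ∀ m : ℕ, ∀ lam ∈ Par n m,
    msym n lam * aDet n (deltaN n) =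
      ∑ μ ∈ Par n m, C (K lam μ) * aDet n (fun i => μ i + (i : ℕ))


noncomputable def df (n : ℕ) (β : Fin n → ℕ) : Fin n →₀ ℕ := Finsupp.equivFunOnFinite.symm β

lemma xpow_eq (n : ℕ) (β : Fin n → ℕ) : xpow n β = monomial (df n β) 1 := by
  have : df n β = ∑ i : Fin n, Finsupp.single i (β i) := by
    ext j
    simp [df, Finsupp.equivFunOnFinite, Finsupp.single_apply]
    rfl
  rw [this, monomial_sum_one, xpow]
  congr 1; ext i
  rw [X_pow_eq_monomial]

lemma coeff_xpow (n : ℕ) (β γ : Fin n → ℕ) :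
    coeff (df n γ) (xpow n β) = if β = γ then 1 else 0 := by
  rw [xpow_eq, coeff_monomial]
  congr 1
  rw [eq_iff_iff]
  constructor
  · intro h; exact Finsupp.equivFunOnFinite.symm.injective h
  · intro h; rw [h]

lemma aDet_eq (n : ℕ) (α : Fin n → ℕ) :
    aDet n α = ∑ σ : Equiv.Perm (Fin n), (Equiv.Perm.sign σ : ℤ) • xpow n (fun i => α (σ i)) := by
  rw [aDet, Matrix.det_apply]
  refine Finset.sum_congr rfl fun σ _ => ?_
  congr 1

lemma coeff_aDet (n : ℕ) (α : Fin n → ℕ) (γ : Fin n → ℕ) :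
    coeff (df n γ) (aDet n α) =
      ∑ σ : Equiv.Perm (Fin n), (Equiv.Perm.sign σ : ℤ) *
        (if (fun i => α (σ i)) = γ then 1 else 0) := by
  rw [aDet_eq, coeff_sum]  -- maybe name differs
  congr 1; ext σ
  rw [coeff_smul, coeff_xpow]
  simp [zsmul_eq_mul]

lemma Par_mono {n m : ℕ} {μ : Fin n → ℕ} (h : μ ∈ Par n m) :
    ∀ i j : Fin n, i ≤ j → μ i ≤ μ j := ((Finset.mem_filter.mp h).2).1

lemma Par_sum {n m : ℕ} {μ : Fin n → ℕ} (h : μ ∈ Par n m) : ∑ i, μ i = m :=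
  ((Finset.mem_filter.mp h).2).2

lemma strict_aux {n : ℕ} {ν : Fin n → ℕ} (hν : ∀ i j : Fin n, i ≤ j → ν i ≤ ν j) :
    StrictMono (fun i : Fin n => ν i + (i : ℕ)) := by
  intro i j hij
  have h1 : ν i ≤ ν j := hν i j hij.le
  have h2 : (i : ℕ) < (j : ℕ) := hij
  show ν i + (i : ℕ) < ν j + (j : ℕ)
  omega

lemma perm_delta_eq {n : ℕ} {ν μ : Fin n → ℕ}
    (hν : ∀ i j : Fin n, i ≤ j → ν i ≤ ν j) (hμ : ∀ i j : Fin n, i ≤ j → μ i ≤ μ j)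
    (σ : Equiv.Perm (Fin n))
    (h : (fun i => ν (σ i) + ((σ i) : ℕ)) = fun i => μ i + (i : ℕ)) : ν = μ ∧ σ = 1 := by
  have hf := strict_aux hν
  have hg := strict_aux hμ
  have hcomp : (fun i => ν (σ i) + ((σ i) : ℕ)) = (fun i : Fin n => ν i + (i : ℕ)) ∘ σ := rfl
  have hfg : (fun i : Fin n => ν i + (i : ℕ)) = fun i => μ i + (i : ℕ) := by
    apply (StrictMono.range_inj hf hg).mp
    rw [← h, hcomp, Set.range_comp, Equiv.range_eq_univ, Set.image_univ]
  have hνμ : ν = μ := by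
    funext i
    have := congrFun hfg i
    simpa using this
  refine ⟨hνμ, ?_⟩
  ext i
  have h1 := congrFun h i
  have h2 := congrFun hfg i
  have : ν (σ i) + ((σ i) : ℕ) = ν i + (i : ℕ) := by omega
  exact congrArg Fin.val (hf.injective this)

lemma coeff_aDet_par {n m : ℕ} {ν μ : Fin n → ℕ} (hν : ν ∈ Par n m) (hμ : μ ∈ Par n m) :
    coeff (df n (fun i => μ i + (i : ℕ))) (aDet n (fun i => ν i + (i : ℕ))) =
      if ν = μ then 1 else 0 := by
  rw [coeff_aDet]
  rcases eq_or_ne ν μ with rfl | hne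
  · rw [if_pos rfl, Finset.sum_eq_single (1 : Equiv.Perm (Fin n))]
    · simp
    · intro σ _ hσ
      rcases eq_or_ne (fun i => (fun i => ν i + (i:ℕ)) (σ i)) (fun i => ν i + (i : ℕ)) with he | he
      · exact absurd (perm_delta_eq (Par_mono hν) (Par_mono hν) σ he).2 hσ
      · rw [if_neg he, mul_zero]
    · simp
  · rw [if_neg hne]
    apply Finset.sum_eq_zero
    intro σ _
    rcases eq_or_ne (fun i => (fun i => ν i + (i:ℕ)) (σ i)) (fun i => μ i + (i : ℕ)) with he | he
    · exact absurd (perm_delta_eq (Par_mono hν) (Par_mono hμ) σ he).1 hne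
    · rw [if_neg he, mul_zero]

def Ind (n : ℕ) (lam μ : Fin n → ℕ) (σ : Equiv.Perm (Fin n)) : Prop :=
  ∃ τ : Equiv.Perm (Fin n), ∀ i, lam (τ i) + ((σ i) : ℕ) = μ i + (i : ℕ)

lemma xpow_mul (n : ℕ) (β γ : Fin n → ℕ) :
    xpow n β * xpow n γ = xpow n (fun i => β i + γ i) := by
  simp [xpow, pow_add, Finset.prod_mul_distrib]

open scoped Classical in
lemma coeff_msym_mul (n : ℕ) (lam μ : Fin n → ℕ) :
    coeff (df n (fun i => μ i + (i : ℕ))) (msym n lam * aDet n (deltaN n)) =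
      ∑ σ : Equiv.Perm (Fin n), (Equiv.Perm.sign σ : ℤ) *
        (if Ind n lam μ σ then 1 else 0) := by
  have expand : msym n lam * aDet n (deltaN n) =
      ∑ β ∈ Finset.univ.image (fun σ : Equiv.Perm (Fin n) => lam ∘ σ),
        ∑ σ : Equiv.Perm (Fin n), (Equiv.Perm.sign σ : ℤ) •
          xpow n (fun i => β i + ((σ i) : ℕ)) := by
    rw [msym, Finset.sum_mul]
    refine Finset.sum_congr rfl fun β _ => ?_
    rw [aDet_eq, Finset.mul_sum]
    refine Finset.sum_congr rfl fun σ _ => ?_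
    rw [mul_smul_comm, xpow_mul]
    rfl
  rw [expand]
  rw [coeff_sum]
  simp only [coeff_sum, coeff_smul, smul_eq_mul, coeff_xpow]
  rw [Finset.sum_comm]
  refine Finset.sum_congr rfl fun σ _ => ?_
  rw [← Finset.mul_sum]
  congr 1
  by_cases h : Ind n lam μ σ
  · obtain ⟨τ, hτ⟩ := h
    rw [if_pos ⟨τ, hτ⟩]
    rw [Finset.sum_eq_single (lam ∘ τ)]
    · rw [if_pos]; funext i; exact hτ i
    · intro β hβ hne
      rw [if_neg]
      intro hc
      apply hne
      funext i
      have h1 := congrFun hc i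
      have h2 := hτ i
      simp only [Function.comp_apply] at h1 h2 ⊢
      omega
    · intro hmem
      exact absurd (Finset.mem_image.mpr ⟨τ, Finset.mem_univ τ, rfl⟩) hmem
  · rw [if_neg h]
    apply Finset.sum_eq_zero
    intro β hβ
    rw [if_neg]
    intro hc
    apply h
    obtain ⟨τ, _, rfl⟩ := Finset.mem_image.mp hβ
    exact ⟨τ, fun i => congrFun hc i⟩

open scoped Classical in
lemma K_formula {n m : ℕ} {K : (Fin n → ℕ) → (Fin n → ℕ) → ℤ} (hK : IsInvKostka n K)
    {lam μ : Fin n → ℕ} (hlam : lam ∈ Par n m) (hμ : μ ∈ Par n m) :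
    K lam μ = ∑ σ : Equiv.Perm (Fin n), (Equiv.Perm.sign σ : ℤ) *
      (if Ind n lam μ σ then 1 else 0) := by
  have h := congrArg (coeff (df n (fun i => μ i + (i : ℕ)))) (hK m lam hlam)
  rw [coeff_msym_mul, coeff_sum] at h
  simp only [coeff_C_mul] at h
  rw [Finset.sum_congr rfl (fun ν hν => by
    rw [coeff_aDet_par hν hμ, mul_ite, mul_one, mul_zero] :
    ∀ ν ∈ Par n m, K lam ν * coeff (df n fun i => μ i + (i:ℕ)) (aDet n fun i => ν i + (i:ℕ))
      = if ν = μ then K lam ν else 0)] at h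
  rw [Finset.sum_ite_eq' (Par n m) μ (fun ν => K lam ν), if_pos hμ] at h
  exact h.symm

lemma fixes_step {n : ℕ} {lam μ : Fin n → ℕ}
    (hmono : ∀ i j : Fin n, i ≤ j → lam i ≤ lam j)
    {σ τ : Equiv.Perm (Fin n)}
    (h : ∀ i, lam (τ i) + ((σ i) : ℕ) = μ i + (i : ℕ))
    {j : Fin n} (hlmj : lam j = μ j)
    (hfix : ∀ i : Fin n, (j : ℕ) < (i : ℕ) → σ i = i ∧ lam (τ i) = lam i) :
    σ j = j ∧ lam (τ j) = lam j := by
  -- 1. σ j ≤ j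
  have hσj : ((σ j) : ℕ) ≤ (j : ℕ) := by
    by_contra hgt
    push_neg at hgt
    have h1 := (hfix (σ j) hgt).1
    have := σ.injective h1
    rw [this] at hgt
    exact lt_irrefl _ hgt
  -- 3. lam (τ j) ≤ lam j
  have hle : lam (τ j) ≤ lam j := by
    by_contra hgt
    push_neg at hgt
    set A : Finset (Fin n) := Finset.univ.filter (fun i => lam j < lam i) with hA
    have hjA : ∀ i ∈ A, (j : ℕ) < (i : ℕ) := by
      intro i hi
      rw [hA, Finset.mem_filter] at hi
      by_contra hle'
      push_neg at hle'
      exact absurd (hmono i j (by exact_mod_cast hle')) (not_le.mpr hi.2)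
    have hmaps : ∀ i ∈ A, τ i ∈ A := by
      intro i hi
      have h2 := (hfix i (hjA i hi)).2
      rw [hA, Finset.mem_filter] at hi ⊢
      exact ⟨Finset.mem_univ _, h2 ▸ hi.2⟩
    have himg : A.image τ = A := by
      apply Finset.eq_of_subset_of_card_le
      · intro x hx
        obtain ⟨i, hi, rfl⟩ := Finset.mem_image.mp hx
        exact hmaps i hi
      · rw [Finset.card_image_of_injective _ τ.injective]
    have hτjA : τ j ∈ A := by
      rw [hA, Finset.mem_filter]; exact ⟨Finset.mem_univ _, hgt⟩
    rw [← himg] at hτjA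
    obtain ⟨i, hi, hii⟩ := Finset.mem_image.mp hτjA
    have : i = j := τ.injective hii
    rw [this] at hi
    rw [hA, Finset.mem_filter] at hi
    exact lt_irrefl _ hi.2
  have hj := h j
  constructor
  · have : ((σ j) : ℕ) = (j : ℕ) := by omega
    exact Fin.ext this
  · omega

lemma fixes {n : ℕ} {lam μ : Fin n → ℕ} (K0 : ℕ)
    (hmono : ∀ i j : Fin n, i ≤ j → lam i ≤ lam j)
    (heq : ∀ j : Fin n, K0 ≤ (j : ℕ) → lam j = μ j)
    {σ τ : Equiv.Perm (Fin n)}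
    (h : ∀ i, lam (τ i) + ((σ i) : ℕ) = μ i + (i : ℕ)) :
    ∀ j : Fin n, K0 ≤ (j : ℕ) → σ j = j ∧ lam (τ j) = lam j := by
  have key : ∀ d : ℕ, ∀ j : Fin n, n ≤ d + (j : ℕ) + 1 → K0 ≤ (j : ℕ) →
      σ j = j ∧ lam (τ j) = lam j := by
    intro d
    induction d with
    | zero =>
      intro j hj hK0
      refine fixes_step hmono h (heq j hK0) ?_
      intro i hi
      exact absurd i.2 (by omega)
    | succ d ih =>
      intro j hj hK0
      refine fixes_step hmono h (heq j hK0) ?_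
      intro i hi
      exact ih i (by omega) (by omega)
  intro j hK0
  exact key n j (by omega) hK0

open scoped Classical in
lemma exists_perm_of_fiber_card {q : ℕ} (f g : Fin q → ℕ)
    (h : ∀ a : ℕ, (Finset.univ.filter (fun i => f i = a)).card =
      (Finset.univ.filter (fun i => g i = a)).card) :
    ∃ σ : Equiv.Perm (Fin q), ∀ i, f (σ i) = g i := by
  have hcard : ∀ a : ℕ, Fintype.card {i // f i = a} = Fintype.card {i // g i = a} := by
    intro a
    rw [Fintype.card_subtype, Fintype.card_subtype]
    exact h a
  have e : ∀ a : ℕ, {i // g i = a} ≃ {i // f i = a} :=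
    fun a => Fintype.equivOfCardEq (hcard a).symm
  refine ⟨((Equiv.sigmaFiberEquiv g).symm.trans
    ((Equiv.sigmaCongrRight e).trans (Equiv.sigmaFiberEquiv f))), ?_⟩
  intro i
  have h1 : (Equiv.sigmaFiberEquiv g).symm i = ⟨g i, ⟨i, rfl⟩⟩ := rfl
  simp only [Equiv.trans_apply, h1, Equiv.sigmaCongrRight_apply, Equiv.sigmaFiberEquiv]
  exact (e (g i) ⟨i, rfl⟩).2

open scoped Classical in
lemma head_count {n k : ℕ} (hkn : k ≤ n) (f : Fin n → ℕ) (a : ℕ) :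
    (Finset.univ.filter fun i₀ : Fin k => f (Fin.castLE hkn i₀) = a).card =
      ((Finset.univ.filter fun i : Fin n => f i = a).filter fun i : Fin n => (i : ℕ) < k).card := by
  have himg : ((Finset.univ.filter fun i : Fin n => f i = a).filter fun i : Fin n => (i : ℕ) < k) =
      (Finset.univ.filter fun i₀ : Fin k => f (Fin.castLE hkn i₀) = a).image
        (Fin.castLE hkn) := by
    ext i
    simp only [Finset.mem_filter, Finset.mem_image, Finset.mem_univ, true_and]
    constructor
    · rintro ⟨hfa, hik⟩
      exact ⟨⟨(i : ℕ), hik⟩, by rwa [show Fin.castLE hkn ⟨(i : ℕ), hik⟩ = i from Fin.ext rfl],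
        Fin.ext rfl⟩
    · rintro ⟨i₀, hfa, rfl⟩
      exact ⟨hfa, i₀.2⟩
  rw [himg, Finset.card_image_of_injective _ (Fin.castLE_injective hkn)]

open scoped Classical in
lemma exists_tau' {n k : ℕ} (hkn : k ≤ n) (lam : Fin n → ℕ) (τ : Equiv.Perm (Fin n))
    (hc : ∀ i : Fin n, k ≤ (i : ℕ) → lam (τ i) = lam i) :
    ∃ τ' : Equiv.Perm (Fin k), ∀ i₀ : Fin k,
      lam (Fin.castLE hkn (τ' i₀)) = lam (τ (Fin.castLE hkn i₀)) := by
  have := exists_perm_of_fiber_card (fun i₀ : Fin k => lam (Fin.castLE hkn i₀))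
    (fun i₀ : Fin k => lam (τ (Fin.castLE hkn i₀))) ?_
  · exact this
  intro a
  rw [head_count hkn lam a, head_count hkn (fun i => lam (τ i)) a]
  -- global count equality
  have hglob : (Finset.univ.filter fun i : Fin n => lam i = a).card =
      (Finset.univ.filter fun i : Fin n => lam (τ i) = a).card := by
    apply Finset.card_bij (fun i _ => τ.symm i)
    · intro i hi
      simp only [Finset.mem_filter, Finset.mem_univ, true_and] at hi ⊢
      rw [Equiv.apply_symm_apply]
      exact hi
    · intro i _ j _ hij
      exact τ.symm.injective hij
    · intro j hj
      simp only [Finset.mem_filter, Finset.mem_univ, true_and] at hj ⊢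
      exact ⟨τ j, by simpa using hj, by simp⟩
  -- tail count equality
  have htail : ((Finset.univ.filter fun i : Fin n => lam i = a).filter
        fun i : Fin n => ¬ (i : ℕ) < k).card =
      ((Finset.univ.filter fun i : Fin n => lam (τ i) = a).filter
        fun i : Fin n => ¬ (i : ℕ) < k).card := by
    congr 1
    ext i
    simp only [Finset.mem_filter, Finset.mem_univ, true_and]
    constructor
    · rintro ⟨h1, h2⟩
      exact ⟨by rw [hc i (by omega)]; exact h1, h2⟩
    · rintro ⟨h1, h2⟩
      exact ⟨by rw [← hc i (by omega)]; exact h1, h2⟩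
  have h1 := Finset.card_filter_add_card_filter_not
    (s := Finset.univ.filter fun i : Fin n => lam i = a) (p := fun i : Fin n => (i : ℕ) < k)
  have h2 := Finset.card_filter_add_card_filter_not
    (s := Finset.univ.filter fun i : Fin n => lam (τ i) = a) (p := fun i : Fin n => (i : ℕ) < k)
  omega

open scoped Classical in
lemma SS_eq {n k : ℕ} (hk1 : 1 ≤ k) (hkn : k ≤ n)
    (lam μ : Fin n → ℕ)
    (hmono : ∀ i j : Fin n, i ≤ j → lam i ≤ lam j)
    (heq : ∀ j : Fin n, k - 1 ≤ (j : ℕ) → lam j = μ j) :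
    (∑ σ : Equiv.Perm (Fin n), (Equiv.Perm.sign σ : ℤ) * (if Ind n lam μ σ then 1 else 0)) =
    (∑ σ' : Equiv.Perm (Fin k), (Equiv.Perm.sign σ' : ℤ) *
      (if Ind k (fun i => lam (Fin.castLE hkn i)) (fun i => μ (Fin.castLE hkn i)) σ'
        then 1 else 0)) := by
  set lam' : Fin k → ℕ := fun i => lam (Fin.castLE hkn i) with hlam'
  set μ' : Fin k → ℕ := fun i => μ (Fin.castLE hkn i) with hμ'
  have hmono' : ∀ i j : Fin k, i ≤ j → lam' i ≤ lam' j := by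
    intro i j hij
    exact hmono _ _ (by exact_mod_cast hij)
  have heq' : ∀ j : Fin k, k - 1 ≤ (j : ℕ) → lam' j = μ' j := by
    intro j hj
    exact heq (Fin.castLE hkn j) hj
  set Q : Equiv.Perm (Fin n) → Prop := fun σ => ∀ j : Fin n, k - 1 ≤ (j : ℕ) → σ j = j
    with hQ
  set Q' : Equiv.Perm (Fin k) → Prop := fun σ => ∀ j : Fin k, k - 1 ≤ (j : ℕ) → σ j = j
    with hQ'
  set emb := Fin.castLEEmb hkn with hemb
  have hembapp : ∀ i : Fin k, emb i = Fin.castLE hkn i := fun i => rfl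
  have hrange : ∀ x : Fin n, x ∈ Set.range emb ↔ (x : ℕ) < k := by
    intro x
    constructor
    · rintro ⟨i, rfl⟩; exact i.2
    · intro hx; exact ⟨⟨x, hx⟩, Fin.ext rfl⟩
  set E : Equiv.Perm (Fin k) → Equiv.Perm (Fin n) :=
    fun σ' => σ'.viaFintypeEmbedding emb with hE
  have hEapp : ∀ (σ' : Equiv.Perm (Fin k)) (i : Fin k),
      E σ' (Fin.castLE hkn i) = Fin.castLE hkn (σ' i) := by
    intro σ' i
    have := σ'.viaFintypeEmbedding_apply_image emb i
    rwa [hembapp, hembapp] at this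
  have hEout : ∀ (σ' : Equiv.Perm (Fin k)) (x : Fin n), ¬ (x : ℕ) < k → E σ' x = x := by
    intro σ' x hx
    exact σ'.viaFintypeEmbedding_apply_notMem_range emb (fun hc => hx ((hrange x).mp hc))
  -- Step 1: restrict both sums to fixing permutations
  rw [← Finset.sum_filter_add_sum_filter_not Finset.univ Q,
    ← Finset.sum_filter_add_sum_filter_not Finset.univ Q']
  have hz1 : ∑ σ ∈ Finset.univ.filter (fun σ => ¬ Q σ),
      (Equiv.Perm.sign σ : ℤ) * (if Ind n lam μ σ then 1 else 0) = 0 := by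
    apply Finset.sum_eq_zero
    intro σ hσ
    rw [Finset.mem_filter] at hσ
    rw [if_neg, mul_zero]
    rintro ⟨τ, hτ⟩
    exact hσ.2 (fun j hj => (fixes (k-1) hmono heq hτ j hj).1)
  have hz2 : ∑ σ ∈ Finset.univ.filter (fun σ => ¬ Q' σ),
      (Equiv.Perm.sign σ : ℤ) * (if Ind k lam' μ' σ then 1 else 0) = 0 := by
    apply Finset.sum_eq_zero
    intro σ hσ
    rw [Finset.mem_filter] at hσ
    rw [if_neg, mul_zero]
    rintro ⟨τ, hτ⟩
    exact hσ.2 (fun j hj => (fixes (k-1) hmono' heq' hτ j hj).1)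
  rw [hz1, hz2, add_zero, add_zero]
  -- head preservation for fixing perms
  have hhead : ∀ σ : Equiv.Perm (Fin n), Q σ → ∀ i : Fin k,
      ((σ (Fin.castLE hkn i)) : ℕ) < k := by
    intro σ hQσ i
    by_contra hge
    push_neg at hge
    have h1 : σ (σ (Fin.castLE hkn i)) = σ (Fin.castLE hkn i) :=
      hQσ (σ (Fin.castLE hkn i)) (by omega)
    have h2 : σ (Fin.castLE hkn i) = Fin.castLE hkn i := σ.injective h1
    rw [h2] at hge
    have : (Fin.castLE hkn i : ℕ) < k := i.2
    omega
  -- the image is exactly the fixing perms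
  have himage : (Finset.univ.filter Q').image E = Finset.univ.filter Q := by
    apply Finset.Subset.antisymm
    · intro σ hσ
      obtain ⟨σ', hσ', rfl⟩ := Finset.mem_image.mp hσ
      rw [Finset.mem_filter] at hσ' ⊢
      refine ⟨Finset.mem_univ _, ?_⟩
      intro j hj
      by_cases hjk : (j : ℕ) < k
      · have hcast : Fin.castLE hkn ⟨(j : ℕ), hjk⟩ = j := Fin.ext rfl
        rw [← hcast, hEapp, hσ'.2 ⟨(j : ℕ), hjk⟩ hj]
      · exact hEout σ' j hjk
    · intro σ hσ
      rw [Finset.mem_filter] at hσ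
      have hQσ := hσ.2
      have hQσinv : ∀ j : Fin n, k - 1 ≤ (j : ℕ) → σ⁻¹ j = j := by
        intro j hj
        have := hQσ j hj
        conv_lhs => rw [← this]
        exact σ.symm_apply_apply j
      have hheadinv := hhead σ⁻¹ hQσinv
      set σ' : Equiv.Perm (Fin k) :=
        { toFun := fun i => ⟨(σ (Fin.castLE hkn i) : ℕ), hhead σ hQσ i⟩
          invFun := fun i => ⟨(σ⁻¹ (Fin.castLE hkn i) : ℕ), hheadinv i⟩
          left_inv := by
            intro i
            apply Fin.ext
            have : Fin.castLE hkn (⟨(σ (Fin.castLE hkn i) : ℕ), hhead σ hQσ i⟩ : Fin k) =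
              σ (Fin.castLE hkn i) := Fin.ext rfl
            simp only [this]
            rw [show σ⁻¹ (σ (Fin.castLE hkn i)) = Fin.castLE hkn i from
              σ.symm_apply_apply _]
            rfl
          right_inv := by
            intro i
            apply Fin.ext
            have : Fin.castLE hkn (⟨(σ⁻¹ (Fin.castLE hkn i) : ℕ), hheadinv i⟩ : Fin k) =
              σ⁻¹ (Fin.castLE hkn i) := Fin.ext rfl
            simp only [this]
            rw [show σ (σ⁻¹ (Fin.castLE hkn i)) = Fin.castLE hkn i from
              σ.apply_symm_apply _]
            rfl } with hσ'def
      have hσ'Q' : Q' σ' := by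
        intro j hj
        apply Fin.ext
        show ((σ (Fin.castLE hkn j)) : ℕ) = (j : ℕ)
        rw [hQσ (Fin.castLE hkn j) hj]
        rfl
      apply Finset.mem_image.mpr
      refine ⟨σ', Finset.mem_filter.mpr ⟨Finset.mem_univ _, hσ'Q'⟩, ?_⟩
      ext x
      by_cases hxk : (x : ℕ) < k
      · have hcast : Fin.castLE hkn ⟨(x : ℕ), hxk⟩ = x := Fin.ext rfl
        rw [← hcast, hEapp]
        rfl
      · rw [hEout σ' x hxk, hQσ x (by omega)]
  rw [← himage, Finset.sum_image (by
    intro σ₁ _ σ₂ _ hEeq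
    ext i
    have := congrArg (fun σ => σ (Fin.castLE hkn i)) hEeq
    rw [hEapp, hEapp] at this
    exact congrArg Fin.val (Fin.castLE_injective hkn this))]
  -- termwise equality
  refine Finset.sum_congr rfl fun σ' hσ' => ?_
  rw [Finset.mem_filter] at hσ'
  congr 1
  · rw [hE]
    norm_cast
    rw [Equiv.Perm.viaFintypeEmbedding_sign]
  · congr 1
    rw [eq_iff_iff]
    constructor
    · rintro ⟨τ, hτ⟩
      have hfx := fixes (k-1) hmono heq hτ
      obtain ⟨τ', hτ'⟩ := exists_tau' hkn lam τ (fun i hi => (hfx i (by omega)).2)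
      refine ⟨τ', fun i => ?_⟩
      have h1 := hτ (Fin.castLE hkn i)
      rw [hEapp] at h1
      have h2 := hτ' i
      show lam' (τ' i) + ((σ' i) : ℕ) = μ' i + (i : ℕ)
      rw [hlam']
      simp only []
      rw [h2]
      exact h1
    · rintro ⟨τ', hτ'⟩
      refine ⟨E τ', fun i => ?_⟩
      by_cases hik : (i : ℕ) < k
      · have hcast : Fin.castLE hkn ⟨(i : ℕ), hik⟩ = i := Fin.ext rfl
        rw [← hcast, hEapp, hEapp]
        exact hτ' ⟨(i : ℕ), hik⟩
      · rw [hEout τ' i hik, hEout σ' i hik, heq i (by omega)]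

lemma head_sum {n k : ℕ} (hkn : k ≤ n) (f : Fin n → ℕ) :
    ∑ i ∈ Finset.univ.filter (fun i : Fin n => (i : ℕ) < k), f i =
      ∑ i₀ : Fin k, f (Fin.castLE hkn i₀) := by
  have himg : Finset.univ.filter (fun i : Fin n => (i : ℕ) < k) =
      (Finset.univ : Finset (Fin k)).image (Fin.castLE hkn) := by
    ext i
    simp only [Finset.mem_filter, Finset.mem_image, Finset.mem_univ, true_and]
    constructor
    · intro hik
      exact ⟨⟨(i : ℕ), hik⟩, Fin.ext rfl⟩
    · rintro ⟨i₀, rfl⟩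
      exact i₀.2
  rw [himg, Finset.sum_image (fun a _ b _ h => Fin.castLE_injective hkn h)]

/-- Corollary 2 (1): if `λ_j = μ_j` for `k ≤ j ≤ n` then `K⁻¹_{λ,μ}` in `n` variables
equals `K⁻¹` of the truncations `(λ₁,…,λ_k)`, `(μ₁,…,μ_k)` in `k` variables.
In particular `K⁻¹_{λ,λ} = 1`. -/
theorem stmt5 (n m k : ℕ) (hmn : m ≤ n) (hk1 : 1 ≤ k) (hkn : k ≤ n)
    (K : (Fin n → ℕ) → (Fin n → ℕ) → ℤ) (hK : IsInvKostka n K)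
    (K' : (Fin k → ℕ) → (Fin k → ℕ) → ℤ) (hK' : IsInvKostka k K')
    (lam μ : Fin n → ℕ) (hlam : lam ∈ Par n m) (hμ : μ ∈ Par n m)
    (heq : ∀ j : Fin n, k - 1 ≤ (j : ℕ) → lam j = μ j) :
    K lam μ = K' (fun i => lam (Fin.castLE hkn i)) (fun i => μ (Fin.castLE hkn i))
      ∧ ∀ ν ∈ Par n m, K ν ν = 1 := by
  constructor
  · set m' : ℕ := ∑ i₀ : Fin k, lam (Fin.castLE hkn i₀) with hm'
    have hsum_eq : ∑ i₀ : Fin k, μ (Fin.castLE hkn i₀) = m' := by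
      have hl := Finset.sum_filter_add_sum_filter_not Finset.univ
        (fun i : Fin n => (i : ℕ) < k) lam
      have hm := Finset.sum_filter_add_sum_filter_not Finset.univ
        (fun i : Fin n => (i : ℕ) < k) μ
      have htail : ∑ i ∈ Finset.univ.filter (fun i : Fin n => ¬ (i : ℕ) < k), lam i =
          ∑ i ∈ Finset.univ.filter (fun i : Fin n => ¬ (i : ℕ) < k), μ i := by
        apply Finset.sum_congr rfl
        intro i hi
        rw [Finset.mem_filter] at hi
        exact heq i (by omega)
      have h1 := Par_sum hlam
      have h2 := Par_sum hμ
      rw [head_sum hkn lam] at hl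
      rw [head_sum hkn μ] at hm
      omega
    have hmem : ∀ (f : Fin n → ℕ), f ∈ Par n m →
        (∑ i₀ : Fin k, f (Fin.castLE hkn i₀) = m') →
        (fun i => f (Fin.castLE hkn i)) ∈ Par k m' := by
      intro f hf hsum
      rw [Par, Finset.mem_filter]
      refine ⟨?_, ?_, hsum⟩
      · rw [Fintype.mem_piFinset]
        intro i
        rw [Finset.mem_range, Nat.lt_succ_iff, ← hsum]
        exact Finset.single_le_sum (f := fun i₀ : Fin k => f (Fin.castLE hkn i₀))
          (fun _ _ => Nat.zero_le _) (Finset.mem_univ i)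
      · intro i j hij
        exact Par_mono hf _ _ (by exact_mod_cast hij)
    have hlam' := hmem lam hlam rfl
    have hμ' := hmem μ hμ hsum_eq
    rw [K_formula hK hlam hμ, SS_eq hk1 hkn lam μ (Par_mono hlam) heq,
      ← K_formula hK' hlam' hμ']
  · intro ν hν
    rw [K_formula hK hν hν]
    rw [Finset.sum_eq_single 1]
    · rw [if_pos ⟨1, fun i => rfl⟩]
      simp
    · intro σ _ hσne
      rw [if_neg, mul_zero]
      rintro ⟨τ, hτ⟩
      exact hσne (Equiv.ext fun j =>
        ((fixes 0 (Par_mono hν) (fun _ _ => rfl) hτ) j (Nat.zero_le _)).1)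
    · intro h
      exact absurd (Finset.mem_univ 1) h
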